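/- Let S ⊆ ℕ^n be upward closed (s ∈ S and s ≤ u implies u ∈ S). Then E := ℕ^n \ S is a finite union of sets of the form {(x_1,...,x_n) : x_i ∈ ℕ for i ∈ I, x_j = r_j fixed for j ∉ I} for subsets I ⊆ {1,...,n} and fixed values r_j. -/

import Mathlib

namespace Stmt15Aux

variable {n : ℕ}

open scoped Classical

def slab (I : Set (Fin n)) (r : Fin n → ℕ) : Set (Fin n → ℕ) :=
  {x | ∀ j ∉ I, x j = r j}

def FUS (E : Set (Fin n → ℕ)) : Prop :=
  ∃ (ι : Type) (_ : Finite ι) (I : ι → Set (Fin n)) (r : ι → Fin n → ℕ),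
    E = ⋃ i, slab (I i) (r i)

lemma fus_univ : FUS (Set.univ : Set (Fin n → ℕ)) :=
  ⟨PUnit, inferInstance, fun _ => Set.univ, fun _ => 0, by
    ext x; simp [slab]⟩

lemma slab_inter_eq {I₁ I₂ : Set (Fin n)} {r₁ r₂ : Fin n → ℕ}
    (h : (slab I₁ r₁ ∩ slab I₂ r₂).Nonempty) :
    slab I₁ r₁ ∩ slab I₂ r₂ =
      slab (I₁ ∩ I₂) (fun j => if j ∈ I₁ then r₂ j else r₁ j) := by
  classical
  obtain ⟨y, hy₁, hy₂⟩ := h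
  ext x
  constructor
  · rintro ⟨h₁, h₂⟩ j hj
    rw [Set.mem_inter_iff, not_and_or] at hj
    by_cases hI : j ∈ I₁
    · simp only [hI, if_true]
      exact h₂ j (hj.resolve_left (by simp [hI]))
    · simp only [hI, if_false]
      exact h₁ j hI
  · intro hx
    constructor
    · intro j hj
      have := hx j (by simp [hj])
      simpa [hj] using this
    · intro j hj
      by_cases hI : j ∈ I₁
      · have := hx j (by simp [hj])
        simpa [hI] using this
      · have := hx j (by simp [hI])
        simp only [hI, if_false] at this
        rw [this, ← hy₁ j hI, hy₂ j hj]

lemma fus_inter {A B : Set (Fin n → ℕ)} (hA : FUS A) (hB : FUS B) : FUS (A ∩ B) := by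
  classical
  obtain ⟨ι₁, _, I₁, r₁, rfl⟩ := hA
  obtain ⟨ι₂, _, I₂, r₂, rfl⟩ := hB
  refine ⟨{p : ι₁ × ι₂ // (slab (I₁ p.1) (r₁ p.1) ∩ slab (I₂ p.2) (r₂ p.2)).Nonempty},
    inferInstance,
    fun p => I₁ p.1.1 ∩ I₂ p.1.2,
    fun p j => if j ∈ I₁ p.1.1 then r₂ p.1.2 j else r₁ p.1.1 j, ?_⟩
  ext x
  simp only [Set.mem_inter_iff, Set.mem_iUnion]
  constructor
  · rintro ⟨⟨i, hi⟩, ⟨j, hj⟩⟩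
    have hne : (slab (I₁ i) (r₁ i) ∩ slab (I₂ j) (r₂ j)).Nonempty := ⟨x, hi, hj⟩
    refine ⟨⟨(i, j), hne⟩, ?_⟩
    have := slab_inter_eq hne
    have hx : x ∈ slab (I₁ i) (r₁ i) ∩ slab (I₂ j) (r₂ j) := ⟨hi, hj⟩
    rw [this] at hx
    exact hx
  · rintro ⟨⟨⟨i, j⟩, hne⟩, hx⟩
    rw [← slab_inter_eq hne] at hx
    exact ⟨⟨i, hx.1⟩, ⟨j, hx.2⟩⟩

lemma fus_biInter (s : Finset (Fin n → ℕ)) (A : (Fin n → ℕ) → Set (Fin n → ℕ))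
    (h : ∀ b ∈ s, FUS (A b)) : FUS (⋂ b ∈ s, A b) := by
  classical
  induction s using Finset.induction_on with
  | empty => simpa using fus_univ
  | @insert a s ha ih =>
    rw [Finset.set_biInter_insert]
    exact fus_inter (h a (Finset.mem_insert_self a s))
      (ih fun b hbs => h b (Finset.mem_insert_of_mem hbs))

lemma fus_not_le (b : Fin n → ℕ) : FUS {x : Fin n → ℕ | ¬ b ≤ x} := by
  refine ⟨Σ j : Fin n, Fin (b j), inferInstance,
    fun p => ({p.1} : Set (Fin n))ᶜ, fun p _ => (p.2 : ℕ), ?_⟩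
  ext x
  simp only [Set.mem_setOf_eq, Set.mem_iUnion, Pi.le_def, not_forall, not_le]
  constructor
  · rintro ⟨j, hj⟩
    exact ⟨⟨j, ⟨x j, hj⟩⟩, by intro j' hj'; simp only [Set.mem_compl_iff,
      Set.mem_singleton_iff, not_not] at hj'; subst hj'; rfl⟩
  · rintro ⟨⟨j, v⟩, hx⟩
    have := hx j (by simp)
    exact ⟨j, by rw [this]; exact v.2⟩

lemma exists_basis (S : Set (Fin n → ℕ)) :
    ∃ B : Finset (Fin n → ℕ), ↑B ⊆ S ∧ ∀ s ∈ S, ∃ b ∈ B, b ≤ s := by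
  classical
  set M : Set (Fin n → ℕ) := {b ∈ S | ∀ c ∈ S, c ≤ b → c = b} with hM
  have hanti : IsAntichain (· ≤ ·) M := by
    rintro a ⟨haS, _⟩ b ⟨hbS, hbmin⟩ hab hle
    exact hab (hbmin a haS hle)
  have hfin : M.Finite := hanti.finite_of_partiallyWellOrderedOn (Set.isPWO_of_wellQuasiOrderedLE M)
  refine ⟨hfin.toFinset, ?_, ?_⟩
  · intro b hb
    exact (hfin.mem_toFinset.mp hb).1
  · intro s hs
    set T : Set (Fin n → ℕ) := {c ∈ S | c ≤ s} with hT
    have hTne : T.Nonempty := ⟨s, hs, le_refl s⟩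
    have hTwf : T.IsWF := (Set.isPWO_of_wellQuasiOrderedLE T).isWF
    set b := hTwf.min hTne with hb
    have hbT : b ∈ T := hTwf.min_mem hTne
    refine ⟨b, hfin.mem_toFinset.mpr ⟨hbT.1, ?_⟩, hbT.2⟩
    intro c hcS hcb
    have hcT : c ∈ T := ⟨hcS, hcb.trans hbT.2⟩
    have hnlt := hTwf.not_lt_min hTne hcT
    by_contra hne
    exact hnlt (lt_of_le_of_ne hcb hne)

end Stmt15Aux

open Stmt15Aux in
theorem stmt15 (n : ℕ) (S : Set (Fin n → ℕ))
    (hS : ∀ s ∈ S, ∀ u, s ≤ u → u ∈ S) :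
    ∃ (k : ℕ) (I : Fin k → Set (Fin n)) (r : Fin k → (Fin n → ℕ)),
      Sᶜ = ⋃ i, {x : Fin n → ℕ | ∀ j ∉ I i, x j = r i j} := by
  obtain ⟨B, hBS, hBbasis⟩ := exists_basis S
  have hcompl : Sᶜ = ⋂ b ∈ B, {x : Fin n → ℕ | ¬ b ≤ x} := by
    ext x
    simp only [Set.mem_compl_iff, Set.mem_iInter, Set.mem_setOf_eq]
    constructor
    · intro hx b hb hle
      exact hx (hS b (hBS hb) x hle)
    · intro h hxS
      obtain ⟨b, hb, hle⟩ := hBbasis x hxS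
      exact h b hb hle
  have hfus : FUS Sᶜ := by
    rw [hcompl]
    exact fus_biInter B _ (fun b _ => fus_not_le b)
  obtain ⟨ι, hι, I, r, hEq⟩ := hfus
  obtain ⟨k, ⟨e⟩⟩ := Finite.exists_equiv_fin ι
  refine ⟨k, fun i => I (e.symm i), fun i => r (e.symm i), ?_⟩
  rw [hEq]
  ext x
  simp only [Set.mem_iUnion]
  exact ⟨fun ⟨i, hi⟩ => ⟨e i, by simpa [slab] using hi⟩,
    fun ⟨i, hi⟩ => ⟨e.symm i, by simpa [slab] using hi⟩⟩
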